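/- Let b be an integer and n ≥ 3. The 2-adic valuation of Φ_n(b) equals 1 if n = 2^m for some m ≥ 2 and b is odd, and equals 0 otherwise. -/

import Mathlib

open Polynomial

theorem cyclotomic_two_adic_valuation (b : ℤ) (n : ℕ) (hn : 3 ≤ n) :
    (((∃ m : ℕ, 2 ≤ m ∧ n = 2 ^ m) ∧ Odd b) →
      padicValInt 2 ((Polynomial.cyclotomic n ℤ).eval b) = 1) ∧
    (¬ ((∃ m : ℕ, 2 ≤ m ∧ n = 2 ^ m) ∧ Odd b) →
      padicValInt 2 ((Polynomial.cyclotomic n ℤ).eval b) = 0) := by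
  constructor
  · rintro ⟨⟨m, hm, rfl⟩, hb⟩
    obtain ⟨k, rfl⟩ : ∃ k, m = k + 2 := ⟨m - 2, by omega⟩
    have heval : (Polynomial.cyclotomic (2 ^ (k + 2)) ℤ).eval b
        = 1 + (b ^ 2 ^ k) ^ 2 := by
      rw [show k + 2 = (k + 1) + 1 from rfl,
        cyclotomic_prime_pow_eq_geom_sum Nat.prime_two]
      simp [Finset.sum_range_succ, ← pow_mul, pow_succ]
      ring
    set c : ℤ := b ^ 2 ^ k with hc
    have hcodd : Odd c := hb.pow
    have hmod : c ^ 2 % 4 = 1 := Int.sq_mod_four_eq_one_of_odd hcodd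
    set v : ℤ := (Polynomial.cyclotomic (2 ^ (k + 2)) ℤ).eval b with hvdef
    have hv : v % 4 = 2 := by rw [heval]; omega
    have h1 : (2 : ℤ) ^ 1 ∣ v := by omega
    have h2 : ¬ (2 : ℤ) ^ 2 ∣ v := by omega
    have e1 := (padicValInt_dvd_iff (p := 2) 1 v).mp (by exact_mod_cast h1)
    have e2 : ¬ (v = 0 ∨ 2 ≤ padicValInt 2 v) := fun h =>
      h2 (by exact_mod_cast (padicValInt_dvd_iff (p := 2) 2 v).mpr h)
    push_neg at e2
    omega
  · intro h
    have hnd : ¬ (((2:ℕ):ℤ) ∣ (Polynomial.cyclotomic n ℤ).eval b) := by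
      rw [← ZMod.intCast_zmod_eq_zero_iff_dvd]
      have hmap : (((Polynomial.cyclotomic n ℤ).eval b : ℤ) : ZMod 2)
          = (Polynomial.cyclotomic n (ZMod 2)).eval (b : ZMod 2) := by
        rw [← map_cyclotomic n (Int.castRingHom (ZMod 2)), eval_map, eval₂_at_intCast]
        simp
      rw [hmap]
      rcases Int.even_or_odd b with hbe | hbo
      · have : (b : ZMod 2) = 0 := by
          rw [ZMod.intCast_zmod_eq_zero_iff_dvd]; exact_mod_cast hbe.two_dvd
        rw [this, ← coeff_zero_eq_eval_zero, cyclotomic_coeff_zero _ (by omega)]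
        exact one_ne_zero
      · have hb1 : (b : ZMod 2) = 1 := by
          obtain ⟨j, rfl⟩ := hbo
          push_cast
          rw [show (2 : ZMod 2) = 0 from rfl]
          ring
        rw [hb1]
        by_cases hpp : ∃ p k : ℕ, p.Prime ∧ p ^ (k + 1) = n
        · obtain ⟨p, k, hp, rfl⟩ := hpp
          have : Fact p.Prime := ⟨hp⟩
          rw [eval_one_cyclotomic_prime_pow]
          have hpodd : p ≠ 2 := by
            rintro rfl
            have hk1 : 2 ≤ k + 1 := by
              rcases k with _ | k
              · norm_num at hn
              · omega
            exact h ⟨⟨k + 1, hk1, rfl⟩, hbo⟩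
          have hpm : p % 2 = 1 := (Nat.Prime.mod_two_eq_one_iff_ne_two hp).mpr hpodd
          have : (p : ZMod 2) = 1 := by
            rw [← ZMod.natCast_mod, hpm, Nat.cast_one]
          rw [this]; exact one_ne_zero
        · rw [eval_one_cyclotomic_not_prime_pow]
          · exact one_ne_zero
          · intro p hp k hk
            rcases k with _ | k
            · simp at hk; omega
            · exact hpp ⟨p, k, hp, hk⟩
    by_contra hne
    exact hnd (by
      simpa using (padicValInt_dvd_iff (p := 2) 1 ((Polynomial.cyclotomic n ℤ).eval b)).mpr
        (Or.inr (Nat.one_le_iff_ne_zero.mpr hne)))
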